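/- Let β = (β₁,β₂,β₃) be a real 3-vector with π/4 ≥ β₁ ≥ β₂ ≥ |β₃|. Then β + (π/2)(−1,0,0) s-majorizes β if and only if β₁ + |β₃| ≤ π/4. Moreover, if β₁ < π/4 then β does not s-majorize β + (π/2)(−1,0,0). -/

import Mathlib

open Matrix Complex Real NormedSpace

noncomputable section

/-- Pauli matrix `σ₁`. -/
def σ1 : Matrix (Fin 2) (Fin 2) ℂ := !![0, 1; 1, 0]
/-- Pauli matrix `σ₂`. -/
def σ2 : Matrix (Fin 2) (Fin 2) ℂ := !![0, -I; I, 0]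
/-- Pauli matrix `σ₃`. -/
def σ3 : Matrix (Fin 2) (Fin 2) ℂ := !![1, 0; 0, -1]

/-- Kronecker product of two `2×2` matrices as a `4×4` matrix, with the index ordering
`|00⟩,|01⟩,|10⟩,|11⟩` (i.e. index `2*i+j` corresponds to `|i⟩⊗|j⟩`). -/
def kron (A B : Matrix (Fin 2) (Fin 2) ℂ) : Matrix (Fin 4) (Fin 4) ℂ :=
  Matrix.of fun i j =>
    A ⟨i.val / 2, by have := i.isLt; omega⟩ ⟨j.val / 2, by have := j.isLt; omega⟩ *
      B ⟨i.val % 2, by have := i.isLt; omega⟩ ⟨j.val % 2, by have := j.isLt; omega⟩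

/-- The Hamiltonian `H_α = α₁ σ₁⊗σ₁ + α₂ σ₂⊗σ₂ + α₃ σ₃⊗σ₃`. -/
def Hmat (a : Fin 3 → ℝ) : Matrix (Fin 4) (Fin 4) ℂ :=
  (a 0 : ℂ) • kron σ1 σ1 + (a 1 : ℂ) • kron σ2 σ2 + (a 2 : ℂ) • kron σ3 σ3

/-- The magic basis matrix: column `j` is the `j`-th magic basis vector, written in the
computational basis `|00⟩,|01⟩,|10⟩,|11⟩`. -/
def Mmag : Matrix (Fin 4) (Fin 4) ℂ :=
  !![0,                      1 / (Real.sqrt 2 : ℂ), -I / (Real.sqrt 2 : ℂ), 0;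
     -I / (Real.sqrt 2 : ℂ), 0,                     0,                      1 / (Real.sqrt 2 : ℂ);
     -I / (Real.sqrt 2 : ℂ), 0,                     0,                      -(1 / (Real.sqrt 2 : ℂ));
     0,                      1 / (Real.sqrt 2 : ℂ), I / (Real.sqrt 2 : ℂ),  0]

/-- `λ(α) = (α₁+α₂−α₃, α₁−α₂+α₃, −α₁+α₂+α₃, −α₁−α₂−α₃)`, the vector of eigenvalues of `H_α`
in the magic basis. -/
def lamv (a : Fin 3 → ℝ) : Fin 4 → ℝ :=
  ![a 0 + a 1 - a 2, a 0 - a 1 + a 2, -a 0 + a 1 + a 2, -a 0 - a 1 - a 2]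

/-- The s-ordered form of a real 3-vector: the absolute values rearranged in nonincreasing
order, with the third component carrying the sign of the product `v₀v₁v₂`. -/
def sOrd (v : Fin 3 → ℝ) : Fin 3 → ℝ :=
  ![max |v 0| (max |v 1| |v 2|),
    |v 0| + |v 1| + |v 2| - max |v 0| (max |v 1| |v 2|) - min |v 0| (min |v 1| |v 2|),
    if v 0 * v 1 * v 2 < 0 then -(min |v 0| (min |v 1| |v 2|))
    else min |v 0| (min |v 1| |v 2|)]

/-- `x` s-majorizes `y`, written for the s-ordered forms:
`x^s₁ ≥ y^s₁`, `x^s₁+x^s₂−x^s₃ ≥ y^s₁+y^s₂−y^s₃` and `x^s₁+x^s₂+x^s₃ ≥ y^s₁+y^s₂+y^s₃`. -/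
def sMaj (x y : Fin 3 → ℝ) : Prop :=
  sOrd y 0 ≤ sOrd x 0 ∧
    sOrd y 0 + sOrd y 1 - sOrd y 2 ≤ sOrd x 0 + sOrd x 1 - sOrd x 2 ∧
    sOrd y 0 + sOrd y 1 + sOrd y 2 ≤ sOrd x 0 + sOrd x 1 + sOrd x 2

theorem stmt10 (β : Fin 3 → ℝ)
    (hb0 : β 0 ≤ π / 4) (hb1 : β 1 ≤ β 0) (hb2 : |β 2| ≤ β 1) :
    (sMaj (fun i => β i + π / 2 * ((![-1, 0, 0] : Fin 3 → ℤ) i : ℝ)) β ↔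
      β 0 + |β 2| ≤ π / 4) ∧
    (β 0 < π / 4 →
      ¬ sMaj β (fun i => β i + π / 2 * ((![-1, 0, 0] : Fin 3 → ℤ) i : ℝ))) := by
  have hpi := Real.pi_pos
  have hb1n : 0 ≤ β 1 := (abs_nonneg _).trans hb2
  have hb0n : 0 ≤ β 0 := hb1n.trans hb1
  have ha0 : |β 0| = β 0 := abs_of_nonneg hb0n
  have ha1 : |β 1| = β 1 := abs_of_nonneg hb1n
  have habs := abs_nonneg (β 2)
  have hle2 : β 2 ≤ β 1 := (le_abs_self _).trans hb2
  have hge2 : -(β 1) ≤ β 2 := neg_le_of_abs_le hb2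
  set f : Fin 3 → ℝ := fun i => β i + π / 2 * ((![-1, 0, 0] : Fin 3 → ℤ) i : ℝ) with hf
  have hf0 : f 0 = β 0 - π / 2 := by simp [hf]; ring
  have hf1 : f 1 = β 1 := by simp [hf]
  have hf2 : f 2 = β 2 := by simp [hf]
  have haf0 : |f 0| = π / 2 - β 0 := by
    rw [hf0, abs_of_nonpos (by linarith)]; ring
  -- sOrd β
  have m1 : max |β 1| |β 2| = β 1 := by rw [ha1]; exact max_eq_left hb2
  have m0 : max |β 0| (max |β 1| |β 2|) = β 0 := by rw [m1, ha0]; exact max_eq_left hb1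
  have n1 : min |β 1| |β 2| = |β 2| := by rw [ha1]; exact min_eq_right hb2
  have n0 : min |β 0| (min |β 1| |β 2|) = |β 2| := by
    rw [n1, ha0]; exact min_eq_right (hb2.trans hb1)
  have s0 : sOrd β 0 = β 0 := by simp [sOrd, m0]
  have s1 : sOrd β 1 = β 1 := by
    simp only [sOrd, Matrix.cons_val_one, Matrix.head_cons, Matrix.cons_val_zero]
    rw [m0, n0, ha0, ha1]; ring
  have s2 : sOrd β 2 = β 2 := by
    simp only [sOrd, Matrix.cons_val_two, Matrix.tail_cons, Matrix.head_cons, n0]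
    split_ifs with h
    · have h2 : β 2 ≤ 0 := by
        by_contra hc
        push_neg at hc
        nlinarith [mul_nonneg (mul_nonneg hb0n hb1n) hc.le]
      rw [abs_of_nonpos h2]; ring
    · have h2 : 0 ≤ β 2 := by
        by_contra hc
        push_neg at hc
        have hb1p : 0 < β 1 := by
          have := abs_of_neg hc; linarith [hb2]
        exact h (mul_neg_of_pos_of_neg (mul_pos (lt_of_lt_of_le hb1p hb1) hb1p) hc)
      exact _root_.abs_of_nonneg h2
  -- sOrd f
  have m1f : max |f 1| |f 2| = β 1 := by rw [hf1, hf2, m1]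
  have m0f : max |f 0| (max |f 1| |f 2|) = π / 2 - β 0 := by
    rw [m1f, haf0]; exact max_eq_left (by linarith)
  have n0f : min |f 0| (min |f 1| |f 2|) = |β 2| := by
    rw [hf1, hf2, n1, haf0]; exact min_eq_right (by linarith [hb2.trans hb1])
  have t0 : sOrd f 0 = π / 2 - β 0 := by simp [sOrd, m0f]
  have t1 : sOrd f 1 = β 1 := by
    simp only [sOrd, Matrix.cons_val_one, Matrix.head_cons, Matrix.cons_val_zero]
    rw [m0f, n0f, haf0, hf1, hf2, ha1]; ring
  have t2 : sOrd f 2 = -β 2 := by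
    simp only [sOrd, Matrix.cons_val_two, Matrix.tail_cons, Matrix.head_cons]
    rw [n0f, hf0, hf1, hf2]
    split_ifs with h
    · have h2 : 0 ≤ β 2 := by
        by_contra hc
        push_neg at hc
        have hb1p : 0 < β 1 := by
          have := abs_of_neg hc; linarith [hb2]
        have : 0 < (β 0 - π / 2) * β 1 * β 2 :=
          mul_pos_of_neg_of_neg (mul_neg_of_neg_of_pos (by linarith) hb1p) hc
        linarith
      rw [_root_.abs_of_nonneg h2]
    · have h2 : β 2 ≤ 0 := by
        by_contra hc
        push_neg at hc
        have hb1p : 0 < β 1 := lt_of_lt_of_le (by linarith [le_abs_self (β 2)]) hb2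
        exact h (mul_neg_of_neg_of_pos (mul_neg_of_neg_of_pos (by linarith) hb1p) hc)
      rw [abs_of_nonpos h2]
  refine ⟨?_, ?_⟩
  · rw [sMaj, s0, s1, s2, t0, t1, t2]
    constructor
    · rintro ⟨a, b, c⟩
      rcases abs_cases (β 2) with ⟨h, _⟩ | ⟨h, _⟩ <;> rw [h] <;> linarith
    · intro hh
      rcases abs_cases (β 2) with ⟨h, h'⟩ | ⟨h, h'⟩ <;> rw [h] at hh <;>
        exact ⟨by linarith, by linarith, by linarith⟩
  · intro hlt hm
    rw [sMaj, s0, t0] at hm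
    linarith [hm.1]
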